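/- For all n ≥ 3, AC(P_n) = AC(B_n) = n − 2, where P_n is the n-vertex path and B_n is the barbell graph on n vertices. -/

import Mathlib

/-- One round of the acquaintance process: the placement (a bijection from agents to
vertices) `x` is updated to `y` by letting agents swap along the edges of a matching of
`G`, i.e. `y = σ ∘ x` for an involution `σ` of the vertices moving each vertex to itself
or to a neighbor. -/
def IsMatchingStep {V : Type*} (G : SimpleGraph V) (x y : Equiv.Perm V) : Prop :=
  ∃ σ : Equiv.Perm V, (∀ v, σ (σ v) = v) ∧ (∀ v, σ v = v ∨ G.Adj v (σ v)) ∧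
    ∀ a, y a = σ (x a)

/-- An `m`-round strategy for acquaintance in `G`: starting from the identity placement,
each round is a matching swap, and every pair of distinct agents is at some time (≤ m)
located on a pair of adjacent vertices. -/
def IsAcqStrategy {V : Type*} (G : SimpleGraph V) (m : ℕ) (f : ℕ → Equiv.Perm V) : Prop :=
  f 0 = Equiv.refl V ∧ (∀ t < m, IsMatchingStep G (f t) (f (t + 1))) ∧
    ∀ a b : V, a ≠ b → ∃ t ≤ m, G.Adj (f t a) (f t b)

/-- The acquaintance time of `G`: the least number of rounds of a strategy for
acquaintance in `G`. -/
noncomputable def AC {V : Type*} (G : SimpleGraph V) : ℕ :=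
  sInf {m | ∃ f : ℕ → Equiv.Perm V, IsAcqStrategy G m f}

/-- The barbell graph on `n` vertices: a clique on the first `⌈n/2⌉` vertices and a clique
on the remaining `⌊n/2⌋` vertices, joined by a single bridge edge. -/
def barbell (n : ℕ) : SimpleGraph (Fin n) :=
  SimpleGraph.fromRel (fun i j =>
    ((i : ℕ) < (n + 1) / 2 ∧ (j : ℕ) < (n + 1) / 2) ∨
    ((n + 1) / 2 ≤ (i : ℕ) ∧ (n + 1) / 2 ≤ (j : ℕ)) ∨
    ((i : ℕ) = (n + 1) / 2 - 1 ∧ (j : ℕ) = (n + 1) / 2))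

namespace ACPB

/-! ### Folding map -/

def wfold (n : ℕ) (s : ℤ) : ℕ :=
  if (s % (2 * n)).toNat < n then (s % (2 * n)).toNat else 2 * n - 1 - (s % (2 * n)).toNat

lemma wfold_lt {n : ℕ} (hn : 0 < n) (s : ℤ) : wfold n s < n := by
  have h2n : (0:ℤ) < 2 * n := by positivity
  have h0 : 0 ≤ s % (2 * (n:ℤ)) := Int.emod_nonneg s (by omega)
  have h1 : s % (2 * (n:ℤ)) < 2 * n := Int.emod_lt_of_pos s h2n
  unfold wfold
  split_ifs with h
  · exact h
  · omega

lemma wfold_of_nonneg {n : ℕ} (hn : 0 < n) {s : ℤ} (h0 : 0 ≤ s) (h1 : s < n) :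
    wfold n s = s.toNat := by
  have : s % (2 * (n:ℤ)) = s := Int.emod_eq_of_lt h0 (by omega)
  unfold wfold
  rw [this]
  split_ifs with h
  · rfl
  · omega

lemma wfold_of_hi {n : ℕ} (hn : 0 < n) {s : ℤ} (h0 : (n:ℤ) ≤ s) (h1 : s < 2 * n) :
    wfold n s = (2 * (n:ℤ) - 1 - s).toNat := by
  have : s % (2 * (n:ℤ)) = s := Int.emod_eq_of_lt (by omega) h1
  unfold wfold
  rw [this]
  split_ifs with h
  · omega
  · omega

lemma wfold_of_neg {n : ℕ} (hn : 0 < n) {s : ℤ} (h0 : -(n:ℤ) ≤ s) (h1 : s < 0) :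
    wfold n s = (-s - 1).toNat := by
  have h2 : s % (2 * (n:ℤ)) = s + 2 * n := by
    have : s % (2 * (n:ℤ)) = (s + 2 * (n:ℤ) * 1) % (2 * n) := by
      rw [Int.add_mul_emod_self_left]
    rw [this, mul_one]
    exact Int.emod_eq_of_lt (by omega) (by omega)
  unfold wfold
  rw [h2]
  split_ifs with h
  · omega
  · omega

/-! ### The step involution -/

def tau (n t : ℕ) (p : Fin n) : Fin n :=
  if p.val % 2 = t % 2 then
    (if h : p.val + 1 < n then ⟨p.val + 1, h⟩ else p)
  else
    (if _h : 1 ≤ p.val then ⟨p.val - 1, lt_of_le_of_lt (Nat.sub_le _ _) p.isLt⟩ else p)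

lemma tau_involutive (n t : ℕ) : Function.Involutive (tau n t) := by
  intro p
  rcases p with ⟨pv, hpv⟩
  by_cases h1 : pv % 2 = t % 2
  · by_cases h2 : pv + 1 < n
    · have e1 : tau n t ⟨pv, hpv⟩ = ⟨pv + 1, h2⟩ := by simp [tau, h1, h2]
      rw [e1]
      have h3 : ¬ ((pv + 1) % 2 = t % 2) := by omega
      have h4 : 1 ≤ pv + 1 := by omega
      simp [tau, h3, h4]
    · have e1 : tau n t ⟨pv, hpv⟩ = ⟨pv, hpv⟩ := by simp [tau, h1, h2]
      rw [e1, e1]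
  · by_cases h2 : 1 ≤ pv
    · have e1 : tau n t ⟨pv, hpv⟩ = ⟨pv - 1, lt_of_le_of_lt (Nat.sub_le _ _) hpv⟩ := by
        simp [tau, h1, h2]
      rw [e1]
      have h3 : (pv - 1) % 2 = t % 2 := by omega
      have h4 : pv - 1 + 1 < n := by omega
      have e2 : tau n t ⟨pv - 1, lt_of_le_of_lt (Nat.sub_le _ _) hpv⟩ =
          ⟨pv - 1 + 1, h4⟩ := by simp [tau, h3, h4]
      rw [e2]
      exact Fin.ext (by show pv - 1 + 1 = pv; omega)
    · have e1 : tau n t ⟨pv, hpv⟩ = ⟨pv, hpv⟩ := by simp [tau, h1, h2]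
      rw [e1, e1]

lemma tau_adj (n t : ℕ) (p : Fin n) :
    tau n t p = p ∨ (SimpleGraph.pathGraph n).Adj p (tau n t p) := by
  rcases p with ⟨pv, hpv⟩
  by_cases h1 : pv % 2 = t % 2
  · by_cases h2 : pv + 1 < n
    · right
      have e1 : tau n t ⟨pv, hpv⟩ = ⟨pv + 1, h2⟩ := by simp [tau, h1, h2]
      rw [e1, SimpleGraph.pathGraph_adj]
      left; rfl
    · left; simp [tau, h1, h2]
  · by_cases h2 : 1 ≤ pv
    · right
      have e1 : tau n t ⟨pv, hpv⟩ = ⟨pv - 1, lt_of_le_of_lt (Nat.sub_le _ _) hpv⟩ := by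
        simp [tau, h1, h2]
      rw [e1, SimpleGraph.pathGraph_adj]
      right; simp only [Fin.val_mk]; omega
    · left; simp [tau, h1, h2]

/-! ### Key stepping lemmas -/

lemma emod_two_eq (n : ℕ) (hn : 0 < n) (s : ℤ) : s % (2 * (n:ℤ)) % 2 = s % 2 :=
  Int.emod_emod_of_dvd s ⟨n, by ring⟩

lemma emod_succ {n : ℕ} (hn : 0 < n) (s : ℤ) :
    (s + 1) % (2 * (n:ℤ)) =
      if s % (2 * (n:ℤ)) = 2 * (n:ℤ) - 1 then 0 else s % (2 * (n:ℤ)) + 1 := by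
  have h0 : 0 ≤ s % (2 * (n:ℤ)) := Int.emod_nonneg s (by positivity)
  have h1 : s % (2 * (n:ℤ)) < 2 * n := Int.emod_lt_of_pos s (by positivity)
  have hb : (s + 1) % (2 * (n:ℤ)) = (s % (2 * (n:ℤ)) + 1) % (2 * (n:ℤ)) := by
    rw [Int.add_emod]
    congr 1
    congr 1
    apply Int.emod_eq_of_lt <;> omega
  rw [hb]
  split_ifs with h
  · rw [h]
    have e : (2 * (n:ℤ) - 1 + 1) = 2 * n := by ring
    rw [e, Int.emod_self]
  · apply Int.emod_eq_of_lt <;> omega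

lemma emod_pred {n : ℕ} (hn : 0 < n) (s : ℤ) :
    (s - 1) % (2 * (n:ℤ)) =
      if s % (2 * (n:ℤ)) = 0 then 2 * (n:ℤ) - 1 else s % (2 * (n:ℤ)) - 1 := by
  have h0 : 0 ≤ s % (2 * (n:ℤ)) := Int.emod_nonneg s (by positivity)
  have h1 : s % (2 * (n:ℤ)) < 2 * n := Int.emod_lt_of_pos s (by positivity)
  have hb : (s - 1) % (2 * (n:ℤ)) = (s % (2 * (n:ℤ)) + (2 * (n:ℤ) - 1)) % (2 * (n:ℤ)) := by
    have e1 : s - 1 = (s + (2 * (n:ℤ) - 1)) + (2 * (n:ℤ)) * (-1) := by ring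
    rw [e1, Int.add_mul_emod_self_left, Int.add_emod]
    congr 1
    congr 1
    apply Int.emod_eq_of_lt <;> omega
  rw [hb]
  split_ifs with h
  · rw [h, zero_add]
    apply Int.emod_eq_of_lt <;> omega
  · have e2 : s % (2 * (n:ℤ)) + (2 * (n:ℤ) - 1) =
        (s % (2 * (n:ℤ)) - 1) + (2 * (n:ℤ)) * 1 := by ring
    rw [e2, Int.add_mul_emod_self_left]
    apply Int.emod_eq_of_lt <;> omega

lemma keyR {n : ℕ} (hn : 0 < n) (t : ℕ) {s : ℤ} (hpar : s % 2 = (t : ℤ) % 2)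
    {p : Fin n} (hp : (p : ℕ) = wfold n s) :
    ((tau n t p : Fin n) : ℕ) = wfold n (s + 1) := by
  have h0 : 0 ≤ s % (2 * (n:ℤ)) := Int.emod_nonneg s (by positivity)
  have h1 : s % (2 * (n:ℤ)) < 2 * n := Int.emod_lt_of_pos s (by positivity)
  have h0' : 0 ≤ (s + 1) % (2 * (n:ℤ)) := Int.emod_nonneg _ (by positivity)
  have h2 : s % (2 * (n:ℤ)) % 2 = s % 2 := emod_two_eq n hn s
  have hs1 := emod_succ hn s
  rcases p with ⟨pv, hpv⟩
  simp only [wfold] at hp ⊢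
  have hmz : ((s % (2 * (n:ℤ))).toNat : ℤ) = s % (2 * (n:ℤ)) := Int.toNat_of_nonneg h0
  have hmz' : (((s + 1) % (2 * (n:ℤ))).toNat : ℤ) = (s + 1) % (2 * (n:ℤ)) :=
    Int.toNat_of_nonneg h0'
  rw [hs1] at hmz'
  by_cases hend : s % (2 * (n:ℤ)) = 2 * n - 1
  · rw [if_pos hend] at hmz'
    rw [hend] at hmz
    simp only [tau]
    split_ifs at hp ⊢ with ha hb hc
    all_goals simp only [Fin.val_mk]
    all_goals omega
  · rw [if_neg hend] at hmz'
    simp only [tau]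
    split_ifs at hp ⊢ with ha hb hc
    all_goals simp only [Fin.val_mk]
    all_goals omega

lemma keyL {n : ℕ} (hn : 0 < n) (t : ℕ) {s : ℤ} (hpar : s % 2 ≠ (t : ℤ) % 2)
    {p : Fin n} (hp : (p : ℕ) = wfold n s) :
    ((tau n t p : Fin n) : ℕ) = wfold n (s - 1) := by
  have h0 : 0 ≤ s % (2 * (n:ℤ)) := Int.emod_nonneg s (by positivity)
  have h1 : s % (2 * (n:ℤ)) < 2 * n := Int.emod_lt_of_pos s (by positivity)
  have h0' : 0 ≤ (s - 1) % (2 * (n:ℤ)) := Int.emod_nonneg _ (by positivity)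
  have h2 : s % (2 * (n:ℤ)) % 2 = s % 2 := emod_two_eq n hn s
  have hs1 := emod_pred hn s
  rcases p with ⟨pv, hpv⟩
  simp only [wfold] at hp ⊢
  have hmz : ((s % (2 * (n:ℤ))).toNat : ℤ) = s % (2 * (n:ℤ)) := Int.toNat_of_nonneg h0
  have hmz' : (((s - 1) % (2 * (n:ℤ))).toNat : ℤ) = (s - 1) % (2 * (n:ℤ)) :=
    Int.toNat_of_nonneg h0'
  rw [hs1] at hmz'
  by_cases hend : s % (2 * (n:ℤ)) = 0
  · rw [if_pos hend] at hmz'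
    rw [hend] at hmz
    simp only [tau]
    split_ifs at hp ⊢ with ha hb hc
    all_goals simp only [Fin.val_mk]
    all_goals omega
  · rw [if_neg hend] at hmz'
    simp only [tau]
    split_ifs at hp ⊢ with ha hb hc
    all_goals simp only [Fin.val_mk]
    all_goals omega

/-! ### The strategy for the path -/

def stratf (n : ℕ) : ℕ → Equiv.Perm (Fin n)
  | 0 => Equiv.refl _
  | t + 1 => (stratf n t).trans (Function.Involutive.toPerm (tau n t) (tau_involutive n t))

lemma stratf_succ_apply (n t : ℕ) (a : Fin n) :
    stratf n (t + 1) a = tau n t (stratf n t a) := rfl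

lemma stratf_val {n : ℕ} (hn : 0 < n) (t : ℕ) (a : Fin n) :
    ((stratf n t a : Fin n) : ℕ) =
      wfold n (if (a : ℕ) % 2 = 0 then ((a : ℕ) : ℤ) + t else ((a : ℕ) : ℤ) - t) := by
  induction t with
  | zero =>
      have hv : (a : ℕ) < n := a.isLt
      split_ifs with h
      · rw [show ((a:ℕ):ℤ) + (0:ℕ) = ((a:ℕ):ℤ) by push_cast; ring]
        rw [wfold_of_nonneg hn (by positivity) (by exact_mod_cast hv)]
        simp [stratf]
      · rw [show ((a:ℕ):ℤ) - (0:ℕ) = ((a:ℕ):ℤ) by push_cast; ring]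
        rw [wfold_of_nonneg hn (by positivity) (by exact_mod_cast hv)]
        simp [stratf]
  | succ t ih =>
      rw [stratf_succ_apply]
      by_cases h : (a : ℕ) % 2 = 0
      · rw [if_pos h] at ih ⊢
        have e : ((a:ℕ):ℤ) + (t + 1 : ℕ) = (((a:ℕ):ℤ) + t) + 1 := by push_cast; ring
        rw [e]
        exact keyR hn t (by omega) ih
      · rw [if_neg h] at ih ⊢
        have e : ((a:ℕ):ℤ) - (t + 1 : ℕ) = (((a:ℕ):ℤ) - t) - 1 := by push_cast; ring
        rw [e]
        have hodd : (a : ℕ) % 2 = 1 := by omega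
        exact keyL hn t (by omega) ih

/-! ### Coverage -/

lemma cover {n : ℕ} (hn : 3 ≤ n) (a b : Fin n) (hab : (a : ℕ) < (b : ℕ)) :
    ∃ t ≤ n - 2, (SimpleGraph.pathGraph n).Adj (stratf n t a) (stratf n t b) := by
  have hn0 : 0 < n := by omega
  have hB : (b : ℕ) < n := b.isLt
  set A := (a : ℕ) with hA
  set B := (b : ℕ) with hB'
  by_cases hpa : A % 2 = 0 <;> by_cases hpb : B % 2 = 0
  · -- both even
    refine ⟨n - 1 - (A + B) / 2, by omega, ?_⟩
    set t := n - 1 - (A + B) / 2 with ht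
    have ea := stratf_val hn0 t a
    have eb := stratf_val hn0 t b
    rw [← hA] at ea
    rw [← hB'] at eb
    rw [if_pos hpa] at ea
    rw [if_pos hpb] at eb
    rw [wfold_of_nonneg hn0 (by positivity) (by push_cast; omega)] at ea
    rw [wfold_of_hi hn0 (by push_cast; omega) (by push_cast; omega)] at eb
    rw [SimpleGraph.pathGraph_adj, ea, eb]
    omega
  · -- A even, B odd
    refine ⟨(B - A - 1) / 2, by omega, ?_⟩
    set t := (B - A - 1) / 2 with ht
    have ea := stratf_val hn0 t a
    have eb := stratf_val hn0 t b
    rw [← hA] at ea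
    rw [← hB'] at eb
    rw [if_pos hpa] at ea
    rw [if_neg hpb] at eb
    rw [wfold_of_nonneg hn0 (by positivity) (by push_cast; omega)] at ea
    rw [wfold_of_nonneg hn0 (by push_cast; omega) (by push_cast; omega)] at eb
    rw [SimpleGraph.pathGraph_adj, ea, eb]
    omega
  · -- A odd, B even
    by_cases hBA : B = A + 1
    · refine ⟨0, by omega, ?_⟩
      have ea := stratf_val hn0 0 a
      have eb := stratf_val hn0 0 b
      rw [← hA] at ea
      rw [← hB'] at eb
      rw [if_neg hpa] at ea
      rw [if_pos hpb] at eb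
      rw [wfold_of_nonneg hn0 (by push_cast; omega) (by push_cast; omega)] at ea
      rw [wfold_of_nonneg hn0 (by push_cast; omega) (by push_cast; omega)] at eb
      rw [SimpleGraph.pathGraph_adj, ea, eb]
      omega
    · -- B ≥ A + 3
      refine ⟨n - (B - A + 1) / 2, by omega, ?_⟩
      set t := n - (B - A + 1) / 2 with ht
      have ea := stratf_val hn0 t a
      have eb := stratf_val hn0 t b
      rw [← hA] at ea
      rw [← hB'] at eb
      rw [if_neg hpa] at ea
      rw [if_pos hpb] at eb
      rw [wfold_of_neg hn0 (by push_cast; omega) (by push_cast; omega)] at ea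
      rw [wfold_of_hi hn0 (by push_cast; omega) (by push_cast; omega)] at eb
      rw [SimpleGraph.pathGraph_adj, ea, eb]
      omega
  · -- both odd
    refine ⟨(A + B) / 2, by omega, ?_⟩
    set t := (A + B) / 2 with ht
    have ea := stratf_val hn0 t a
    have eb := stratf_val hn0 t b
    rw [← hA] at ea
    rw [← hB'] at eb
    rw [if_neg hpa] at ea
    rw [if_neg hpb] at eb
    rw [wfold_of_neg hn0 (by push_cast; omega) (by push_cast; omega)] at ea
    rw [wfold_of_nonneg hn0 (by push_cast; omega) (by push_cast; omega)] at eb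
    rw [SimpleGraph.pathGraph_adj, ea, eb]
    omega

theorem path_strategy {n : ℕ} (hn : 3 ≤ n) :
    IsAcqStrategy (SimpleGraph.pathGraph n) (n - 2) (stratf n) := by
  refine ⟨rfl, ?_, ?_⟩
  · intro t _
    exact ⟨Function.Involutive.toPerm (tau n t) (tau_involutive n t),
      fun v => tau_involutive n t v,
      fun v => tau_adj n t v,
      fun a => rfl⟩
  · intro a b hab
    have hne : (a : ℕ) ≠ (b : ℕ) := fun h => hab (Fin.ext h)
    rcases lt_or_gt_of_ne hne with h | h
    · exact cover hn a b h
    · obtain ⟨t, ht, hadj⟩ := cover hn b a h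
      exact ⟨t, ht, hadj.symm⟩

/-! ### Lower bound for the barbell graph -/

lemma barbell_adj {n : ℕ} {u v : Fin n} :
    (barbell n).Adj u v ↔ u ≠ v ∧
      (((u : ℕ) < (n + 1) / 2 ∧ (v : ℕ) < (n + 1) / 2) ∨
       ((n + 1) / 2 ≤ (u : ℕ) ∧ (n + 1) / 2 ≤ (v : ℕ)) ∨
       ((u : ℕ) = (n + 1) / 2 - 1 ∧ (v : ℕ) = (n + 1) / 2) ∨
       ((v : ℕ) = (n + 1) / 2 - 1 ∧ (u : ℕ) = (n + 1) / 2)) := by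
  rw [barbell, SimpleGraph.fromRel_adj]
  constructor
  · rintro ⟨h1, h2⟩
    exact ⟨h1, by tauto⟩
  · rintro ⟨h1, h2⟩
    exact ⟨h1, by tauto⟩

lemma step_sides {n : ℕ} (hn : 3 ≤ n) {K1 K2 : Fin n}
    (hK1 : (K1 : ℕ) = (n + 1) / 2 - 1) (hK2 : (K2 : ℕ) = (n + 1) / 2)
    {x y : Equiv.Perm (Fin n)} (h : IsMatchingStep (barbell n) x y) :
    (∀ a : Fin n, ((x a : Fin n) : ℕ) < (n + 1) / 2 ↔ ((y a : Fin n) : ℕ) < (n + 1) / 2) ∨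
    (y (x.symm K1) = K2 ∧ y (x.symm K2) = K1 ∧
      ∀ a : Fin n, a ≠ x.symm K1 → a ≠ x.symm K2 →
        (((x a : Fin n) : ℕ) < (n + 1) / 2 ↔ ((y a : Fin n) : ℕ) < (n + 1) / 2)) := by
  obtain ⟨σ, hinv, hadj, hy⟩ := h
  have hpres : ∀ v : Fin n, (v ≠ K1 ∨ σ v ≠ K2) → (v ≠ K2 ∨ σ v ≠ K1) →
      (((σ v : Fin n) : ℕ) < (n + 1) / 2 ↔ ((v : Fin n) : ℕ) < (n + 1) / 2) := by
    intro v hv1 hv2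
    rcases hadj v with he | hadj'
    · rw [he]
    · rw [barbell_adj] at hadj'
      obtain ⟨hne, hcase⟩ := hadj'
      rcases hcase with ⟨h1, h2⟩ | ⟨h1, h2⟩ | ⟨h1, h2⟩ | ⟨h1, h2⟩
      · omega
      · omega
      · exfalso
        rcases hv1 with hv | hv
        · exact hv (Fin.ext (by omega))
        · exact hv (Fin.ext (by omega))
      · exfalso
        rcases hv2 with hv | hv
        · exact hv (Fin.ext (by omega))
        · exact hv (Fin.ext (by omega))
  by_cases hbr : σ K1 = K2
  · right
    have hbr2 : σ K2 = K1 := by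
      have h2 := hinv K1
      rw [hbr] at h2
      exact h2
    refine ⟨?_, ?_, ?_⟩
    · rw [hy, Equiv.apply_symm_apply, hbr]
    · rw [hy, Equiv.apply_symm_apply, hbr2]
    · intro a ha1 ha2
      have hxa1 : x a ≠ K1 := fun hc => ha1 (by rw [← hc, Equiv.symm_apply_apply])
      have hxa2 : x a ≠ K2 := fun hc => ha2 (by rw [← hc, Equiv.symm_apply_apply])
      rw [hy a]
      exact (hpres (x a) (Or.inl hxa1) (Or.inl hxa2)).symm
  · left
    intro a
    rw [hy a]
    refine (hpres (x a) ?_ ?_).symm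
    · by_cases hxa : x a = K1
      · right; rw [hxa]; exact hbr
      · left; exact hxa
    · by_cases hxa : x a = K2
      · right
        rw [hxa]
        intro hc
        have h2 := hinv K2
        rw [hc] at h2
        exact hbr h2
      · left; exact hxa

lemma add_le_mul_succ {A B : ℕ} (hA : 1 ≤ A) (hB : 1 ≤ B) : A + B ≤ A * B + 1 := by
  nlinarith

theorem barbell_lower {n : ℕ} (hn : 3 ≤ n) {m : ℕ} {f : ℕ → Equiv.Perm (Fin n)}
    (hf : IsAcqStrategy (barbell n) m f) : n - 2 ≤ m := by
  obtain ⟨hf0, hfstep, hfacq⟩ := hf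
  set k := (n + 1) / 2 with hk
  have hk2 : 2 ≤ k := by omega
  have hkn : k < n := by omega
  set K1 : Fin n := ⟨k - 1, by omega⟩ with hK1
  set K2 : Fin n := ⟨k, by omega⟩ with hK2
  have hK1v : (K1 : ℕ) = k - 1 := rfl
  have hK2v : (K2 : ℕ) = k := rfl
  have hms : ∀ t, 1 ≤ t → t ≤ m → IsMatchingStep (barbell n) (f (t - 1)) (f t) := by
    intro t h1 h2
    have h3 := hfstep (t - 1) (by omega)
    rwa [Nat.sub_add_cancel h1] at h3
  have hdich : ∀ t, 1 ≤ t → t ≤ m →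
      (¬ f t ((f (t - 1)).symm K1) = K2 ∧
        (∀ a : Fin n, ((f (t - 1) a : Fin n) : ℕ) < k ↔ ((f t a : Fin n) : ℕ) < k)) ∨
      (f t ((f (t - 1)).symm K1) = K2 ∧ f t ((f (t - 1)).symm K2) = K1 ∧
        ∀ a : Fin n, a ≠ (f (t - 1)).symm K1 → a ≠ (f (t - 1)).symm K2 →
          (((f (t - 1) a : Fin n) : ℕ) < k ↔ ((f t a : Fin n) : ℕ) < k)) := by
    intro t h1 h2
    have hss := step_sides hn (by rw [hK1v, hk]) (by rw [hK2v, hk]) (hms t h1 h2)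
    rw [← hk] at hss
    rcases hss with hall | ⟨hb1, hb2, hrest⟩
    · left
      refine ⟨?_, hall⟩
      intro hc
      have h3 := hall ((f (t - 1)).symm K1)
      rw [Equiv.apply_symm_apply, hc] at h3
      rw [hK1v, hK2v] at h3
      have h4 := h3.mp (by omega)
      omega
    · right
      exact ⟨hb1, hb2, hrest⟩
  set S : Finset ℕ := (Finset.range (m + 1)).filter
      (fun t => 1 ≤ t ∧ f t ((f (t - 1)).symm K1) = K2) with hS
  set RS : Finset ℕ := (Finset.range (m + 1)).filter
      (fun t => ¬ (1 ≤ t ∧ f t ((f (t - 1)).symm K1) = K2) ∧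
        t + 1 ≤ m ∧ f (t + 1) ((f t).symm K1) = K2) with hRS
  haveI instAL : DecidablePred
      (fun a : Fin n => ∀ t ∈ Finset.range (m + 1), ((f t a : Fin n) : ℕ) < k) :=
    fun _ => Finset.decidableDforallFinset
  haveI instBR : DecidablePred
      (fun a : Fin n => ∀ t ∈ Finset.range (m + 1), ¬ ((f t a : Fin n) : ℕ) < k) :=
    fun _ => Finset.decidableDforallFinset
  set AL : Finset (Fin n) := Finset.univ.filter
      (fun a => ∀ t ∈ Finset.range (m + 1), ((f t a : Fin n) : ℕ) < k) with hAL
  set BR : Finset (Fin n) := Finset.univ.filter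
      (fun a => ∀ t ∈ Finset.range (m + 1), ¬ ((f t a : Fin n) : ℕ) < k) with hBR
  set W : Finset ℕ := (Finset.range (m + 1)).filter
      (fun t => (f t).symm K1 ∈ AL ∧ (f t).symm K2 ∈ BR) with hW
  -- RS injects into S
  have hRS_S : RS.card ≤ S.card := by
    apply Finset.card_le_card_of_injOn (fun t => t + 1)
    · intro t ht
      simp only [Finset.mem_coe] at ht ⊢
      rw [hRS, Finset.mem_filter, Finset.mem_range] at ht
      rw [hS, Finset.mem_filter, Finset.mem_range]
      obtain ⟨h1, h2, h3, h4⟩ := ht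
      refine ⟨by omega, by omega, ?_⟩
      rw [Nat.add_sub_cancel]
      exact h4
    · intro a _ b _ h
      dsimp only at h
      omega
  -- disjointness
  have hd1 : Disjoint S RS := by
    rw [Finset.disjoint_left]
    intro t htS htRS
    rw [hS, Finset.mem_filter] at htS
    rw [hRS, Finset.mem_filter] at htRS
    exact htRS.2.1 htS.2
  have hd2 : Disjoint S W := by
    rw [Finset.disjoint_left]
    intro t htS htW
    rw [hS, Finset.mem_filter, Finset.mem_range] at htS
    rw [hW, Finset.mem_filter, Finset.mem_range] at htW
    obtain ⟨htm, h1t, hcr⟩ := htS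
    obtain ⟨-, hal, -⟩ := htW
    have hb2 := ((hdich t h1t (by omega)).resolve_left (fun h => h.1 hcr)).2.1
    have he : (f t).symm K1 = (f (t - 1)).symm K2 := by
      rw [← hb2, Equiv.symm_apply_apply]
    rw [hAL, Finset.mem_filter] at hal
    have h3 := hal.2 (t - 1) (Finset.mem_range.mpr (by omega))
    rw [he, Equiv.apply_symm_apply] at h3
    rw [hK2v] at h3
    omega
  have hd3 : Disjoint RS W := by
    rw [Finset.disjoint_left]
    intro t htRS htW
    rw [hRS, Finset.mem_filter, Finset.mem_range] at htRS
    rw [hW, Finset.mem_filter, Finset.mem_range] at htW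
    obtain ⟨-, -, ht1m, hcr⟩ := htRS
    obtain ⟨-, hal, -⟩ := htW
    rw [hAL, Finset.mem_filter] at hal
    have h3 := hal.2 (t + 1) (Finset.mem_range.mpr (by omega))
    rw [hcr] at h3
    rw [hK2v] at h3
    omega
  -- the three sets fit into the time range
  have hsum : S.card + RS.card + W.card ≤ m + 1 := by
    have hsub : (S ∪ RS) ∪ W ⊆ Finset.range (m + 1) := by
      apply Finset.union_subset (Finset.union_subset ?_ ?_) ?_
      · rw [hS]; exact Finset.filter_subset _ _
      · rw [hRS]; exact Finset.filter_subset _ _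
      · rw [hW]; exact Finset.filter_subset _ _
    have hcard : ((S ∪ RS) ∪ W).card = S.card + RS.card + W.card := by
      rw [Finset.card_union_of_disjoint (Finset.disjoint_union_left.mpr ⟨hd2, hd3⟩),
        Finset.card_union_of_disjoint hd1]
    calc S.card + RS.card + W.card = ((S ∪ RS) ∪ W).card := hcard.symm
      _ ≤ (Finset.range (m + 1)).card := Finset.card_le_card hsub
      _ = m + 1 := Finset.card_range _
  -- every always-left/always-right pair is displayed at the bridge
  have hWcard : AL.card * BR.card ≤ W.card := by
    rw [← Finset.card_product]
    apply Finset.card_le_card_of_surjOn (fun t => ((f t).symm K1, (f t).symm K2))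
    intro p hp
    rw [Finset.coe_product, Set.mem_prod] at hp
    obtain ⟨hpa, hpb⟩ := hp
    rw [Finset.mem_coe] at hpa hpb
    have hpa' := hpa
    have hpb' := hpb
    rw [hAL, Finset.mem_filter] at hpa'
    rw [hBR, Finset.mem_filter] at hpb'
    have hALa := hpa'.2
    have hBRb := hpb'.2
    have hab : p.1 ≠ p.2 := by
      intro hc
      have h1 := hALa 0 (Finset.mem_range.mpr (by omega))
      have h2 := hBRb 0 (Finset.mem_range.mpr (by omega))
      rw [hc] at h1
      exact h2 h1
    obtain ⟨t, htm, hadj⟩ := hfacq p.1 p.2 hab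
    rw [barbell_adj, ← hk] at hadj
    obtain ⟨-, hcase⟩ := hadj
    have h1 := hALa t (Finset.mem_range.mpr (by omega))
    have h2 := hBRb t (Finset.mem_range.mpr (by omega))
    rcases hcase with ⟨ha, hb⟩ | ⟨ha, hb⟩ | ⟨ha, hb⟩ | ⟨ha, hb⟩
    · exact absurd hb h2
    · omega
    · have hfa : f t p.1 = K1 := Fin.ext (by rw [hK1v]; omega)
      have hfb : f t p.2 = K2 := Fin.ext (by rw [hK2v]; omega)
      refine ⟨t, ?_, ?_⟩
      · rw [Finset.mem_coe, hW, Finset.mem_filter, Finset.mem_range]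
        refine ⟨by omega, ?_, ?_⟩
        · rw [← hfa, Equiv.symm_apply_apply]
          exact hpa
        · rw [← hfb, Equiv.symm_apply_apply]
          exact hpb
      · show ((f t).symm K1, (f t).symm K2) = p
        rw [← hfa, ← hfb, Equiv.symm_apply_apply, Equiv.symm_apply_apply]
    · omega
  -- counting vertices on each side
  set LS : Finset (Fin n) := Finset.univ.filter (fun a : Fin n => (a : ℕ) < k) with hLS
  set RSet : Finset (Fin n) := Finset.univ.filter (fun a : Fin n => ¬ (a : ℕ) < k) with hRSet
  have hLScard : LS.card = k := by
    rw [hLS]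
    rw [show Finset.univ.filter (fun a : Fin n => (a : ℕ) < k)
        = Finset.map (Fin.castLEEmb (le_of_lt hkn)) Finset.univ from ?_]
    · rw [Finset.card_map, Finset.card_univ, Fintype.card_fin]
    · ext a
      simp only [Finset.mem_filter, Finset.mem_univ, true_and, Finset.mem_map,
        Fin.castLEEmb_apply]
      constructor
      · intro h
        exact ⟨⟨(a : ℕ), h⟩, Fin.ext rfl⟩
      · rintro ⟨b, rfl⟩
        exact lt_of_lt_of_le b.isLt (le_refl k)
  have hRScard : RSet.card = n - k := by
    have := Finset.card_filter_add_card_filter_not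
      (s := (Finset.univ : Finset (Fin n))) (p := fun a : Fin n => (a : ℕ) < k)
    rw [Finset.card_univ, Fintype.card_fin] at this
    rw [hRSet]
    rw [← hLS] at this
    omega
  have hALsub : AL ⊆ LS := by
    intro a ha
    rw [hAL, Finset.mem_filter] at ha
    have h1 := ha.2 0 (Finset.mem_range.mpr (by omega))
    rw [hf0] at h1
    rw [hLS, Finset.mem_filter]
    exact ⟨Finset.mem_univ a, h1⟩
  have hBRsub : BR ⊆ RSet := by
    intro a ha
    rw [hBR, Finset.mem_filter] at ha
    have h1 := ha.2 0 (Finset.mem_range.mpr (by omega))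
    rw [hf0] at h1
    rw [hRSet, Finset.mem_filter]
    exact ⟨Finset.mem_univ a, h1⟩
  -- left leavers inject into RS
  have hLleave : (LS \ AL).card ≤ RS.card := by
    have hmain : ∀ a ∈ LS \ AL,
        (sInf {t | t ≤ m ∧ ¬ ((f t a : Fin n) : ℕ) < k} - 1) ∈ RS ∧
        a = (f (sInf {t | t ≤ m ∧ ¬ ((f t a : Fin n) : ℕ) < k} - 1)).symm K1 := by
      intro a ha
      rw [Finset.mem_sdiff, hLS, Finset.mem_filter] at ha
      obtain ⟨⟨-, hak⟩, hnal⟩ := ha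
      have hex : {t | t ≤ m ∧ ¬ ((f t a : Fin n) : ℕ) < k}.Nonempty := by
        rw [hAL, Finset.mem_filter] at hnal
        push_neg at hnal
        obtain ⟨t, ht1, ht2⟩ := hnal (Finset.mem_univ a)
        rw [Finset.mem_range] at ht1
        exact ⟨t, by omega, by omega⟩
      set t0 := sInf {t | t ≤ m ∧ ¬ ((f t a : Fin n) : ℕ) < k} with ht0
      obtain ⟨ht0m, ht0k⟩ : t0 ≤ m ∧ ¬ ((f t0 a : Fin n) : ℕ) < k := Nat.sInf_mem hex
      have hmin : ∀ u, u < t0 → u ≤ m → ((f u a : Fin n) : ℕ) < k := by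
        intro u hu hum
        have h5 := Nat.notMem_of_lt_sInf (by rw [← ht0]; exact hu)
        rw [Set.mem_setOf_eq] at h5
        by_contra hc
        exact h5 ⟨hum, hc⟩
      have ht01 : 1 ≤ t0 := by
        rcases Nat.eq_zero_or_pos t0 with h | h
        · exfalso
          rw [h] at ht0k
          rw [hf0] at ht0k
          exact ht0k hak
        · exact h
      have hlagp : ((f (t0 - 1) a : Fin n) : ℕ) < k := hmin (t0 - 1) (by omega) (by omega)
      have hcr := (hdich t0 ht01 ht0m).resolve_left
        (fun h => ht0k ((h.2 a).mp hlagp))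
      obtain ⟨hc1, hc2, hc3⟩ := hcr
      have haK1 : a = (f (t0 - 1)).symm K1 := by
        by_contra hne1
        have hne2 : a ≠ (f (t0 - 1)).symm K2 := by
          intro hc
          rw [hc, Equiv.apply_symm_apply] at hlagp
          rw [hK2v] at hlagp
          omega
        exact ht0k ((hc3 a hne1 hne2).mp hlagp)
      constructor
      · rw [hRS, Finset.mem_filter, Finset.mem_range]
        refine ⟨by omega, ?_, by omega, ?_⟩
        · rintro ⟨hge1, hcrp⟩
          rcases hdich (t0 - 1) hge1 (by omega) with ⟨hnc, -⟩ | ⟨-, hb2, -⟩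
          · exact hnc hcrp
          · have he2 : (f (t0 - 1)).symm K1 = (f (t0 - 1 - 1)).symm K2 := by
              rw [← hb2, Equiv.symm_apply_apply]
            have haK2 := haK1.trans he2
            have h4 : ((f (t0 - 1 - 1) a : Fin n) : ℕ) < k :=
              hmin (t0 - 1 - 1) (by omega) (by omega)
            rw [haK2, Equiv.apply_symm_apply] at h4
            rw [hK2v] at h4
            omega
        · have e : t0 - 1 + 1 = t0 := by omega
          rw [e]
          exact hc1
      · exact haK1
    apply Finset.card_le_card_of_injOn
      (fun a => sInf {t | t ≤ m ∧ ¬ ((f t a : Fin n) : ℕ) < k} - 1)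
    · intro a ha
      exact (hmain a ha).1
    · intro a ha b hb hgab
      rw [Finset.mem_coe] at ha hb
      have h1 := (hmain a ha).2
      have h2 := (hmain b hb).2
      dsimp only at hgab
      rw [h1, h2, hgab]
  -- right leavers inject into RS
  have hRleave : (RSet \ BR).card ≤ RS.card := by
    have hmain : ∀ a ∈ RSet \ BR,
        (sInf {t | t ≤ m ∧ ((f t a : Fin n) : ℕ) < k} - 1) ∈ RS ∧
        a = (f (sInf {t | t ≤ m ∧ ((f t a : Fin n) : ℕ) < k} - 1)).symm K2 := by
      intro a ha
      rw [Finset.mem_sdiff, hRSet, Finset.mem_filter] at ha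
      obtain ⟨⟨-, hak⟩, hnbr⟩ := ha
      have hex : {t | t ≤ m ∧ ((f t a : Fin n) : ℕ) < k}.Nonempty := by
        rw [hBR, Finset.mem_filter] at hnbr
        push_neg at hnbr
        obtain ⟨t, ht1, ht2⟩ := hnbr (Finset.mem_univ a)
        rw [Finset.mem_range] at ht1
        exact ⟨t, by omega, by omega⟩
      set t0 := sInf {t | t ≤ m ∧ ((f t a : Fin n) : ℕ) < k} with ht0
      obtain ⟨ht0m, ht0k⟩ : t0 ≤ m ∧ ((f t0 a : Fin n) : ℕ) < k := Nat.sInf_mem hex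
      have hmin : ∀ u, u < t0 → u ≤ m → ¬ ((f u a : Fin n) : ℕ) < k := by
        intro u hu hum
        have h5 := Nat.notMem_of_lt_sInf (by rw [← ht0]; exact hu)
        rw [Set.mem_setOf_eq] at h5
        by_contra hc
        exact h5 ⟨hum, hc⟩
      have ht01 : 1 ≤ t0 := by
        rcases Nat.eq_zero_or_pos t0 with h | h
        · exfalso
          rw [h] at ht0k
          rw [hf0] at ht0k
          exact hak ht0k
        · exact h
      have hlagp : ¬ ((f (t0 - 1) a : Fin n) : ℕ) < k := hmin (t0 - 1) (by omega) (by omega)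
      have hcr := (hdich t0 ht01 ht0m).resolve_left
        (fun h => hlagp ((h.2 a).mpr ht0k))
      obtain ⟨hc1, hc2, hc3⟩ := hcr
      have haK2 : a = (f (t0 - 1)).symm K2 := by
        by_contra hne2
        have hne1 : a ≠ (f (t0 - 1)).symm K1 := by
          intro hc
          rw [hc, Equiv.apply_symm_apply] at hlagp
          rw [hK1v] at hlagp
          omega
        exact hlagp ((hc3 a hne1 hne2).mpr ht0k)
      constructor
      · rw [hRS, Finset.mem_filter, Finset.mem_range]
        refine ⟨by omega, ?_, by omega, ?_⟩
        · rintro ⟨hge1, hcrp⟩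
          rcases hdich (t0 - 1) hge1 (by omega) with ⟨hnc, -⟩ | ⟨hb1, -, -⟩
          · exact hnc hcrp
          · have he2 : (f (t0 - 1)).symm K2 = (f (t0 - 1 - 1)).symm K1 := by
              rw [← hb1, Equiv.symm_apply_apply]
            have haK1' := haK2.trans he2
            have h4 : ¬ ((f (t0 - 1 - 1) a : Fin n) : ℕ) < k :=
              hmin (t0 - 1 - 1) (by omega) (by omega)
            rw [haK1', Equiv.apply_symm_apply] at h4
            rw [hK1v] at h4
            omega
        · have e : t0 - 1 + 1 = t0 := by omega
          rw [e]
          exact hc1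
      · exact haK2
    apply Finset.card_le_card_of_injOn
      (fun a => sInf {t | t ≤ m ∧ ((f t a : Fin n) : ℕ) < k} - 1)
    · intro a ha
      exact (hmain a ha).1
    · intro a ha b hb hgab
      rw [Finset.mem_coe] at ha hb
      have h1 := (hmain a ha).2
      have h2 := (hmain b hb).2
      dsimp only at hgab
      rw [h1, h2, hgab]
  -- final counting
  have hALcard : k ≤ AL.card + RS.card := by
    have h1 := Finset.card_sdiff_add_card_eq_card hALsub
    omega
  have hBRcard : n - k ≤ BR.card + RS.card := by
    have h1 := Finset.card_sdiff_add_card_eq_card hBRsub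
    omega
  by_cases hrho : n - k ≤ RS.card
  · omega
  · have hA1 : 1 ≤ AL.card := by omega
    have hB1 : 1 ≤ BR.card := by omega
    have hprod : AL.card + BR.card ≤ AL.card * BR.card + 1 := add_le_mul_succ hA1 hB1
    have hfin : AL.card + BR.card ≤ W.card + 1 :=
      le_trans hprod (Nat.add_le_add_right hWcard 1)
    omega

/-! ### Monotonicity and conclusion -/

lemma strategy_mono {V : Type*} {G H : SimpleGraph V} (hGH : G ≤ H) {m : ℕ}
    {f : ℕ → Equiv.Perm V} (h : IsAcqStrategy G m f) : IsAcqStrategy H m f := by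
  obtain ⟨h0, h1, h2⟩ := h
  refine ⟨h0, ?_, ?_⟩
  · intro t ht
    obtain ⟨σ, ha, hb, hc⟩ := h1 t ht
    exact ⟨σ, ha, fun v => (hb v).imp id (fun hadj => hGH hadj), hc⟩
  · intro a b hab
    obtain ⟨t, ht, hadj⟩ := h2 a b hab
    exact ⟨t, ht, hGH hadj⟩

lemma path_le_barbell {n : ℕ} (hn : 3 ≤ n) : SimpleGraph.pathGraph n ≤ barbell n := by
  intro u v h
  rw [SimpleGraph.pathGraph_adj] at h
  rw [barbell_adj]
  refine ⟨fun he => by rw [he] at h; omega, by omega⟩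

end ACPB

/-- For `n ≥ 3`, the acquaintance times of the `n`-vertex path and of the barbell graph
on `n` vertices are both exactly `n - 2`. -/
theorem AC_path_barbell (n : ℕ) (hn : 3 ≤ n) :
    AC (SimpleGraph.pathGraph n) = n - 2 ∧ AC (barbell n) = n - 2 := by
  have hup := ACPB.path_strategy hn
  have hupb := ACPB.strategy_mono (ACPB.path_le_barbell hn) hup
  have hne1 : {m | ∃ f, IsAcqStrategy (SimpleGraph.pathGraph n) m f}.Nonempty :=
    ⟨n - 2, ACPB.stratf n, hup⟩
  have hne2 : {m | ∃ f, IsAcqStrategy (barbell n) m f}.Nonempty :=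
    ⟨n - 2, ACPB.stratf n, hupb⟩
  constructor
  · apply le_antisymm
    · exact Nat.sInf_le ⟨ACPB.stratf n, hup⟩
    · apply le_csInf hne1
      rintro b ⟨f, hf⟩
      exact ACPB.barbell_lower hn (ACPB.strategy_mono (ACPB.path_le_barbell hn) hf)
  · apply le_antisymm
    · exact Nat.sInf_le ⟨ACPB.stratf n, hupb⟩
    · apply le_csInf hne2
      rintro b ⟨f, hf⟩
      exact ACPB.barbell_lower hn hf
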